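/- The operators T_i := −U_i arising from an S_n EL-labeling of a finite graded poset P of rank n with 0̂ and 1̂ satisfy the defining relations of the 0-Hecke algebra H_n(0) of type A_{n−1}: T_i² = −T_i, T_i T_j = T_j T_i for |i−j| ≥ 2, and T_i T_{i+1} T_i = T_{i+1} T_i T_{i+1}; hence the linear extension to the free vector space on maximal chains of P gives a representation of H_n(0). -/
import Mathlib


/-! Common definitions: graded posets, saturated/maximal chains, EL-labelings,
inversions and weak order on permutations, descent operators, flag vectors. -/

section Perm

/-- The inversion set `INV(v) = {(v j, v i) : i < j, v i > v j}` of a permutation of `Fin n`. -/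
def invSet {n : ℕ} (v : Equiv.Perm (Fin n)) : Set (Fin n × Fin n) :=
  {p | ∃ i j : Fin n, i < j ∧ v j = p.1 ∧ v i = p.2 ∧ v j < v i}

/-- The number of inversions of a permutation. -/
noncomputable def invCount {n : ℕ} (v : Equiv.Perm (Fin n)) : ℕ :=
  (invSet v).ncard

/-- The adjacent transposition swapping `i` and `i+1` (0-indexed) in `Fin n`
(junk value `1` if out of range). -/
def adjSwap (n : ℕ) (i : ℕ) : Equiv.Perm (Fin n) :=
  if h : i + 1 < n then Equiv.swap ⟨i, Nat.lt_of_succ_lt h⟩ ⟨i + 1, h⟩ else 1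

/-- One step of the right weak order: `v` is obtained from `w` by multiplying on the
right by an adjacent transposition which removes exactly one inversion. -/
def weakStep {n : ℕ} (w v : Equiv.Perm (Fin n)) : Prop :=
  ∃ i : ℕ, i + 1 < n ∧ v = w * adjSwap n i ∧ invCount v + 1 = invCount w

/-- Right weak order: `v ≤_R w` iff `v` is obtained from `w` by a sequence of
inversion-removing right multiplications by adjacent transpositions. -/
def leRW {n : ℕ} (v w : Equiv.Perm (Fin n)) : Prop :=
  Relation.ReflTransGen weakStep w v

end Perm

section Posets

variable {P : Type*}

/-- `c` (an `ℕ`-indexed sequence, constant equal to `y` from index `k` on) is a saturated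
chain `x = c 0 ⋖ c 1 ⋖ ⋯ ⋖ c k = y` of length `k` from `x` to `y`. -/
def IsSatChain [PartialOrder P] (k : ℕ) (c : ℕ → P) (x y : P) : Prop :=
  c 0 = x ∧ (∀ j, k ≤ j → c j = y) ∧ ∀ j, j < k → c j ⋖ c (j + 1)

/-- The chain `c` of length `k` has (weakly) increasing labels. -/
def IncreasingChain [PartialOrder P] (lab : P → P → ℤ) (k : ℕ) (c : ℕ → P) : Prop :=
  ∀ j, j + 1 < k → lab (c j) (c (j + 1)) ≤ lab (c (j + 1)) (c (j + 2))

/-- The label word of length-`k` chain `c` lexicographically strictly precedes that of `d`. -/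
def LexLt [PartialOrder P] (lab : P → P → ℤ) (k : ℕ) (c d : ℕ → P) : Prop :=
  ∃ i < k, (∀ j, j < i → lab (c j) (c (j + 1)) = lab (d j) (d (j + 1))) ∧
    lab (c i) (c (i + 1)) < lab (d i) (d (i + 1))

/-- `lab` is an EL-labeling: in every interval `[x,y]` (containing a saturated chain of
length `k`), there is a unique maximal chain with increasing labels, and it is
lexicographically strictly smaller than every other maximal chain of the interval. -/
def IsELLabeling [PartialOrder P] (lab : P → P → ℤ) : Prop :=
  ∀ x y : P, x < y → ∀ k : ℕ, (∃ c, IsSatChain k c x y) →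
    (∃! c, IsSatChain k c x y ∧ IncreasingChain lab k c) ∧
    ∀ c d, IsSatChain k c x y → IncreasingChain lab k c → IsSatChain k d x y → c ≠ d →
      LexLt lab k c d

/-- `rk` is a rank function making `P` a graded poset of rank `n`, with `rk ⊥ = 0`,
`rk ⊤ = n`, and ranks increasing by one along covers. -/
def IsGraded [PartialOrder P] [BoundedOrder P] (n : ℕ) (rk : P → ℕ) : Prop :=
  rk (⊥ : P) = 0 ∧ rk (⊤ : P) = n ∧ ∀ x y : P, x ⋖ y → rk y = rk x + 1

/-- `lab` is an `S_n` EL-labeling: an EL-labeling such that the label word of every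
maximal chain of `P` is a permutation of `{1, …, n}`. -/
def IsSnELLabeling [PartialOrder P] [BoundedOrder P] (n : ℕ) (lab : P → P → ℤ) : Prop :=
  IsELLabeling lab ∧
    ∀ c : ℕ → P, IsSatChain n c ⊥ ⊤ →
      ∃ σ : Equiv.Perm (Fin n), ∀ j : Fin n, lab (c j) (c ((j : ℕ) + 1)) = ((σ j : ℕ) : ℤ) + 1

/-- The maximal chains of a graded bounded poset of rank `n`. -/
abbrev MaxChain (n : ℕ) (P : Type*) [PartialOrder P] [BoundedOrder P] :=
  {c : ℕ → P // IsSatChain n c ⊥ ⊤}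

/-- The label word of `c` has a descent at position `i` (meaningful for `1 ≤ i ≤ n-1`):
the label of the `i`-th edge exceeds the label of the `(i+1)`-st edge. -/
def DescentAt [PartialOrder P] (lab : P → P → ℤ) (c : ℕ → P) (i : ℕ) : Prop :=
  lab (c i) (c (i + 1)) < lab (c (i - 1)) (c i)

/-- The maximal chain `c` has label word (the permutation) `σ`, where the label of the
`j`-th edge is `σ(j)` (written 1-indexed: the value `(σ j) + 1`). -/
def HasWord [PartialOrder P] (lab : P → P → ℤ) {n : ℕ} (c : ℕ → P)
    (σ : Equiv.Perm (Fin n)) : Prop :=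
  ∀ j : Fin n, lab (c j) (c ((j : ℕ) + 1)) = ((σ j : ℕ) : ℤ) + 1

/-- The defining property of the descent-removing operators `U_i` attached to an
`S_n` EL-labeling: `U i m` agrees with `m` away from rank `i` and has no descent at `i`. -/
def IsUSystem [PartialOrder P] [BoundedOrder P] (n : ℕ) (lab : P → P → ℤ)
    (U : ℕ → MaxChain n P → MaxChain n P) : Prop :=
  ∀ i, 1 ≤ i → i < n → ∀ m : MaxChain n P,
    (∀ j, j ≠ i → (U i m).1 j = m.1 j) ∧ ¬ DescentAt lab (U i m).1 i

/-- `m'` lies in the closure of the maximal chain `m` under the operators `U_i`. -/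
def InClosure [PartialOrder P] [BoundedOrder P] (n : ℕ)
    (U : ℕ → MaxChain n P → MaxChain n P) (m m' : MaxChain n P) : Prop :=
  ∃ l : List ℕ, (∀ i ∈ l, 1 ≤ i ∧ i < n) ∧ List.foldr U m l = m'

/-- `α_P(S)`: the number of chains of `P` whose rank set is exactly `S`. -/
noncomputable def alphaP [PartialOrder P] (rk : P → ℕ) (S : Finset ℕ) : ℕ :=
  Nat.card {t : Finset P // IsChain (· ≤ ·) (t : Set P) ∧ t.image rk = S ∧ t.card = S.card}

/-- The flag `h`-vector `β_P(S) = ∑_{T ⊆ S} (-1)^{|S - T|} α_P(T)`. -/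
noncomputable def betaP [PartialOrder P] (rk : P → ℕ) (S : Finset ℕ) : ℤ :=
  ∑ T ∈ S.powerset, (-1 : ℤ) ^ (S.card - T.card) * (alphaP rk T : ℤ)

/-- `P` is bowtie-free: there are no distinct `a, b, c, d` with `a` and `b` each
covering both `c` and `d`. -/
def BowtieFree (P : Type*) [PartialOrder P] : Prop :=
  ∀ a b c d : P, c ⋖ a → d ⋖ a → c ⋖ b → d ⋖ b → a = b ∨ c = d

/-- The operators `U_i`, `1 ≤ i ≤ n-1`, form a local 0-Hecke action on the maximal
chains: they are local at rank `i`, idempotent, commute at distance `≥ 2`, and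
satisfy the braid relations. -/
def IsLocalHeckeAction [PartialOrder P] [BoundedOrder P] (n : ℕ)
    (U : ℕ → MaxChain n P → MaxChain n P) : Prop :=
  (∀ i, 1 ≤ i → i < n → ∀ m : MaxChain n P, ∀ j, j ≠ i → (U i m).1 j = m.1 j) ∧
  (∀ i, 1 ≤ i → i < n → ∀ m, U i (U i m) = U i m) ∧
  (∀ i j, 1 ≤ i → i < n → 1 ≤ j → j < n → i + 2 ≤ j → ∀ m, U i (U j m) = U j (U i m)) ∧
  (∀ i, 1 ≤ i → i + 1 < n → ∀ m,
    U i (U (i + 1) (U i m)) = U (i + 1) (U i (U (i + 1) m)))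

/-- A good `H_n(0)` action: a local 0-Hecke action on the maximal chains such that for
every `S ⊆ [n-1]`, `α_P(S)` equals the number of maximal chains whose descent set
`{i : U_i m ≠ m}` is contained in `S` (equivalently, `ω F_P = ch χ_P`). -/
def IsGoodHeckeAction [PartialOrder P] [BoundedOrder P] (n : ℕ) (rk : P → ℕ)
    (U : ℕ → MaxChain n P → MaxChain n P) : Prop :=
  IsLocalHeckeAction n U ∧
    ∀ S : Finset ℕ, S ⊆ Finset.Icc 1 (n - 1) →
      alphaP rk S =
        Nat.card {m : MaxChain n P // ∀ i, 1 ≤ i → i < n → U i m ≠ m → i ∈ S}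

/-- An expression `U_{i_1} ⋯ U_{i_r} (m) = m'` (the list `l = [i_1, …, i_r]`, applied
right-to-left) is restless: every single application strictly changes the chain. -/
def Restless [PartialOrder P] [BoundedOrder P] {n : ℕ}
    (U : ℕ → MaxChain n P → MaxChain n P) (l : List ℕ) (m m' : MaxChain n P) : Prop :=
  List.foldr U m l = m' ∧
    ∀ i t, (i :: t) <:+ l → U i (List.foldr U m t) ≠ List.foldr U m t

/-- A subset of a lattice closed under join and meet. -/
def SublClosed [Lattice P] (t : Set P) : Prop :=
  ∀ a ∈ t, ∀ b ∈ t, a ⊔ b ∈ t ∧ a ⊓ b ∈ t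

/-- The sublattice generated by the set `s`. -/
def genSub [Lattice P] (s : Set P) : Set P :=
  ⋂₀ {t : Set P | s ⊆ t ∧ SublClosed t}

/-- The subset `t` is distributive (as a sublattice). -/
def DistribOn [Lattice P] (t : Set P) : Prop :=
  ∀ a ∈ t, ∀ b ∈ t, ∀ c ∈ t, a ⊓ (b ⊔ c) = (a ⊓ b) ⊔ (a ⊓ c)

/-- A lattice (graded, of rank `n`) is supersolvable if it has a maximal chain (an
M-chain) which together with any other chain generates a distributive sublattice. -/
def Supersolvable (n : ℕ) (P : Type*) [Lattice P] [BoundedOrder P] : Prop :=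
  ∃ M : MaxChain n P, ∀ c : Set P, IsChain (· ≤ ·) c →
    DistribOn (genSub (Set.range M.1 ∪ c))

end Posets

section HeckeAux

variable {P : Type*} [PartialOrder P] [BoundedOrder P]

/-- The unique increasing chain in a rank-2 interval: two saturated chains `x ⋖ p ⋖ y`,
`x ⋖ q ⋖ y` with weakly increasing labels coincide. -/
private lemma two_chain_unique {lab : P → P → ℤ} (hEL : IsELLabeling lab)
    {x y p q : P} (hxp : x ⋖ p) (hpy : p ⋖ y) (hxq : x ⋖ q) (hqy : q ⋖ y)
    (hp : lab x p ≤ lab p y) (hq : lab x q ≤ lab q y) : p = q := by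
  have hxy : x < y := hxp.lt.trans hpy.lt
  have hsat : ∀ r : P, x ⋖ r → r ⋖ y →
      IsSatChain 2 (fun j => if j = 0 then x else if j = 1 then r else y) x y := by
    intro r hr1 hr2
    refine ⟨by simp, fun j hj => ?_, fun j hj => ?_⟩
    · have h0 : j ≠ 0 := by omega
      have h1 : j ≠ 1 := by omega
      simp [h0, h1]
    · interval_cases j
      · simpa using hr1
      · simpa using hr2
  have hinc : ∀ r : P, lab x r ≤ lab r y →
      IncreasingChain lab 2 (fun j => if j = 0 then x else if j = 1 then r else y) := by
    intro r hr j hj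
    have hj0 : j = 0 := by omega
    subst hj0
    simpa using hr
  obtain ⟨u, -, hu⟩ := (hEL x y hxy 2 ⟨_, hsat p hxp hpy⟩).1
  have h1 := hu _ ⟨hsat p hxp hpy, hinc p hp⟩
  have h2 := hu _ ⟨hsat q hxq hqy, hinc q hq⟩
  have h3 := h1.trans h2.symm
  simpa using congrFun h3 1

/-- The unique increasing chain in a rank-3 interval. -/
private lemma three_chain_unique {lab : P → P → ℤ} (hEL : IsELLabeling lab)
    {x y p q p' q' : P}
    (c1 : x ⋖ p) (c2 : p ⋖ q) (c3 : q ⋖ y)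
    (c1' : x ⋖ p') (c2' : p' ⋖ q') (c3' : q' ⋖ y)
    (i1 : lab x p ≤ lab p q) (i2 : lab p q ≤ lab q y)
    (i1' : lab x p' ≤ lab p' q') (i2' : lab p' q' ≤ lab q' y) :
    p = p' ∧ q = q' := by
  have hxy : x < y := c1.lt.trans (c2.lt.trans c3.lt)
  have hsat : ∀ r s : P, x ⋖ r → r ⋖ s → s ⋖ y →
      IsSatChain 3
        (fun j => if j = 0 then x else if j = 1 then r else if j = 2 then s else y) x y := by
    intro r s h1 h2 h3
    refine ⟨by simp, fun j hj => ?_, fun j hj => ?_⟩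
    · have e0 : j ≠ 0 := by omega
      have e1 : j ≠ 1 := by omega
      have e2 : j ≠ 2 := by omega
      simp [e0, e1, e2]
    · interval_cases j
      · simpa using h1
      · simpa using h2
      · simpa using h3
  have hinc : ∀ r s : P, lab x r ≤ lab r s → lab r s ≤ lab s y →
      IncreasingChain lab 3
        (fun j => if j = 0 then x else if j = 1 then r else if j = 2 then s else y) := by
    intro r s hr hs j hj
    have : j = 0 ∨ j = 1 := by omega
    rcases this with h | h <;> subst h
    · simpa using hr
    · simpa using hs
  obtain ⟨u, -, hu⟩ := (hEL x y hxy 3 ⟨_, hsat p q c1 c2 c3⟩).1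
  have h1 := hu _ ⟨hsat p q c1 c2 c3, hinc p q i1 i2⟩
  have h2 := hu _ ⟨hsat p' q' c1' c2' c3', hinc p' q' i1' i2'⟩
  have h3 := h1.trans h2.symm
  exact ⟨by simpa using congrFun h3 1, by simpa using congrFun h3 2⟩

private lemma cov_pred {n : ℕ} (m : MaxChain n P) {i : ℕ} (h1 : 1 ≤ i) (h2 : i ≤ n) :
    m.1 (i - 1) ⋖ m.1 i := by
  have h := m.2.2.2 (i - 1) (by omega)
  rwa [Nat.sub_add_cancel h1] at h

/-- Two maximal chains agreeing at `i-1` and `i+1` with weakly-increasing labels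
around `i` agree at `i`. -/
private lemma chains_mid_eq {n : ℕ} {lab : P → P → ℤ} (hEL : IsELLabeling lab)
    (c d : MaxChain n P) {i : ℕ} (h1 : 1 ≤ i) (h2 : i < n)
    (ea : c.1 (i - 1) = d.1 (i - 1)) (eb : c.1 (i + 1) = d.1 (i + 1))
    (hc : lab (c.1 (i - 1)) (c.1 i) ≤ lab (c.1 i) (c.1 (i + 1)))
    (hd : lab (d.1 (i - 1)) (d.1 i) ≤ lab (d.1 i) (d.1 (i + 1))) :
    c.1 i = d.1 i := by
  have hxq : c.1 (i - 1) ⋖ d.1 i := by rw [ea]; exact cov_pred d h1 h2.le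
  have hqy : d.1 i ⋖ c.1 (i + 1) := by rw [eb]; exact d.2.2.2 i h2
  have hq : lab (c.1 (i - 1)) (d.1 i) ≤ lab (d.1 i) (c.1 (i + 1)) := by
    rw [ea, eb]; exact hd
  exact two_chain_unique hEL (cov_pred c h1 h2.le) (c.2.2.2 i h2) hxq hqy hc hq

/-- Two maximal chains agreeing at `i-1` and `i+2` with weakly-increasing labels
at positions `i, i+1` agree at `i` and `i+1`. -/
private lemma chains_mid3_eq {n : ℕ} {lab : P → P → ℤ} (hEL : IsELLabeling lab)
    (c d : MaxChain n P) {i : ℕ} (h1 : 1 ≤ i) (h2 : i + 1 < n)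
    (ea : c.1 (i - 1) = d.1 (i - 1)) (eb : c.1 (i + 2) = d.1 (i + 2))
    (hc1 : lab (c.1 (i - 1)) (c.1 i) ≤ lab (c.1 i) (c.1 (i + 1)))
    (hc2 : lab (c.1 i) (c.1 (i + 1)) ≤ lab (c.1 (i + 1)) (c.1 (i + 2)))
    (hd1 : lab (d.1 (i - 1)) (d.1 i) ≤ lab (d.1 i) (d.1 (i + 1)))
    (hd2 : lab (d.1 i) (d.1 (i + 1)) ≤ lab (d.1 (i + 1)) (d.1 (i + 2))) :
    c.1 i = d.1 i ∧ c.1 (i + 1) = d.1 (i + 1) := by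
  have hi : i < n := by omega
  have c1' : c.1 (i - 1) ⋖ d.1 i := by rw [ea]; exact cov_pred d h1 hi.le
  have c2' : d.1 i ⋖ d.1 (i + 1) := d.2.2.2 i hi
  have c3' : d.1 (i + 1) ⋖ c.1 (i + 2) := by rw [eb]; exact d.2.2.2 (i + 1) h2
  have i1' : lab (c.1 (i - 1)) (d.1 i) ≤ lab (d.1 i) (d.1 (i + 1)) := by rw [ea]; exact hd1
  have i2' : lab (d.1 i) (d.1 (i + 1)) ≤ lab (d.1 (i + 1)) (c.1 (i + 2)) := by
    rw [eb]; exact hd2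
  exact three_chain_unique hEL (cov_pred c h1 hi.le) (c.2.2.2 i hi) (c.2.2.2 (i + 1) h2)
    c1' c2' c3' hc1 hc2 i1' i2'

/-- Key consequence of the `S_n`-word property: if two maximal chains agree away from
rank `i`, then the (multi)sets of their two edge labels around rank `i` coincide. -/
private lemma swap_pairs {n : ℕ} {lab : P → P → ℤ} (hsn : IsSnELLabeling n lab)
    (c d : MaxChain n P) {i : ℕ} (h1 : 1 ≤ i) (h2 : i < n)
    (hagree : ∀ j, j ≠ i → c.1 j = d.1 j) :
    (lab (c.1 (i - 1)) (c.1 i) = lab (d.1 (i - 1)) (d.1 i) ∧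
      lab (c.1 i) (c.1 (i + 1)) = lab (d.1 i) (d.1 (i + 1))) ∨
    (lab (c.1 (i - 1)) (c.1 i) = lab (d.1 i) (d.1 (i + 1)) ∧
      lab (c.1 i) (c.1 (i + 1)) = lab (d.1 (i - 1)) (d.1 i)) := by
  obtain ⟨σ, hσ⟩ := hsn.2 c.1 c.2
  obtain ⟨τ, hτ⟩ := hsn.2 d.1 d.2
  have pfa : i - 1 < n := by omega
  have hii : i - 1 + 1 = i := by omega
  have hab : (⟨i - 1, pfa⟩ : Fin n) ≠ ⟨i, h2⟩ := by
    intro h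
    have := congrArg Fin.val h
    simp only [] at this
    omega
  have key : ∀ j : Fin n, j ≠ ⟨i - 1, pfa⟩ → j ≠ ⟨i, h2⟩ → σ j = τ j := by
    intro j hja hjb
    have hj1 : (j : ℕ) ≠ i := fun h => hjb (Fin.ext h)
    have hj2 : (j : ℕ) + 1 ≠ i := by
      intro h
      exact hja (Fin.ext (by simp only []; omega))
    have h' := hσ j
    rw [hagree _ hj1, hagree _ hj2, hτ j] at h'
    exact Fin.ext (by omega)
  have ha' : σ ⟨i - 1, pfa⟩ = τ ⟨i - 1, pfa⟩ ∨ σ ⟨i - 1, pfa⟩ = τ ⟨i, h2⟩ := by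
    rcases eq_or_ne (τ.symm (σ ⟨i - 1, pfa⟩)) ⟨i - 1, pfa⟩ with h | h
    · left
      have h' := congrArg τ h
      rwa [Equiv.apply_symm_apply] at h'
    · rcases eq_or_ne (τ.symm (σ ⟨i - 1, pfa⟩)) ⟨i, h2⟩ with h3 | h3
      · right
        have h' := congrArg τ h3
        rwa [Equiv.apply_symm_apply] at h'
      · exfalso
        have hk := key _ h h3
        rw [Equiv.apply_symm_apply] at hk
        exact h (σ.injective hk)
  have hb' : σ ⟨i, h2⟩ = τ ⟨i - 1, pfa⟩ ∨ σ ⟨i, h2⟩ = τ ⟨i, h2⟩ := by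
    rcases eq_or_ne (τ.symm (σ ⟨i, h2⟩)) ⟨i - 1, pfa⟩ with h | h
    · left
      have h' := congrArg τ h
      rwa [Equiv.apply_symm_apply] at h'
    · rcases eq_or_ne (τ.symm (σ ⟨i, h2⟩)) ⟨i, h2⟩ with h3 | h3
      · right
        have h' := congrArg τ h3
        rwa [Equiv.apply_symm_apply] at h'
      · exfalso
        have hk := key _ h h3
        rw [Equiv.apply_symm_apply] at hk
        exact h3 (σ.injective hk)
  have main : (σ ⟨i - 1, pfa⟩ = τ ⟨i - 1, pfa⟩ ∧ σ ⟨i, h2⟩ = τ ⟨i, h2⟩) ∨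
      (σ ⟨i - 1, pfa⟩ = τ ⟨i, h2⟩ ∧ σ ⟨i, h2⟩ = τ ⟨i - 1, pfa⟩) := by
    rcases ha' with h | h
    · rcases hb' with h' | h'
      · exact absurd (σ.injective (h.trans h'.symm)) hab
      · exact Or.inl ⟨h, h'⟩
    · rcases hb' with h' | h'
      · exact Or.inr ⟨h, h'⟩
      · exact absurd (σ.injective (h.trans h'.symm)) hab
  have hval : ∀ (e : MaxChain n P) (ρ : Equiv.Perm (Fin n)),
      (∀ j : Fin n, lab (e.1 j) (e.1 ((j : ℕ) + 1)) = ((ρ j : ℕ) : ℤ) + 1) →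
      lab (e.1 (i - 1)) (e.1 i) = ((ρ ⟨i - 1, pfa⟩ : ℕ) : ℤ) + 1 ∧
      lab (e.1 i) (e.1 (i + 1)) = ((ρ ⟨i, h2⟩ : ℕ) : ℤ) + 1 := by
    intro e ρ hρ
    constructor
    · have h' := hρ ⟨i - 1, pfa⟩
      rwa [show ((⟨i - 1, pfa⟩ : Fin n) : ℕ) = i - 1 from rfl, hii] at h'
    · exact hρ ⟨i, h2⟩
  obtain ⟨ca, cb⟩ := hval c σ hσ
  obtain ⟨da, db⟩ := hval d τ hτ
  rcases main with ⟨e1, e2⟩ | ⟨e1, e2⟩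
  · exact Or.inl ⟨by rw [ca, da, e1], by rw [cb, db, e2]⟩
  · exact Or.inr ⟨by rw [ca, db, e1], by rw [cb, da, e2]⟩

end HeckeAux

/-- The linear operators `T_i = -U_i` on the free complex vector space
on the maximal chains of an `S_n` EL-labeled finite graded poset satisfy the defining
relations of the 0-Hecke algebra `H_n(0)` of type `A_{n-1}`, hence give a representation
of `H_n(0)`. -/
theorem hecke_representation {P : Type*} [PartialOrder P] [BoundedOrder P] [Fintype P]
    {n : ℕ} (rk : P → ℕ) (hg : IsGraded n rk)
    (lab : P → P → ℤ) (hsn : IsSnELLabeling n lab)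
    (U : ℕ → MaxChain n P → MaxChain n P) (hU : IsUSystem n lab U)
    (T : ℕ → Module.End ℂ (MaxChain n P →₀ ℂ))
    (hT : ∀ i, T i = -(Finsupp.lmapDomain ℂ ℂ (U i))) :
    (∀ i, 1 ≤ i → i < n → T i * T i = -(T i)) ∧
    (∀ i j, 1 ≤ i → i < n → 1 ≤ j → j < n → i + 2 ≤ j → T i * T j = T j * T i) ∧
    (∀ i, 1 ≤ i → i + 1 < n →
      T i * T (i + 1) * T i = T (i + 1) * T i * T (i + 1)) := by
  have hEL := hsn.1
  have hloc : ∀ i, 1 ≤ i → i < n → ∀ m : MaxChain n P, ∀ j, j ≠ i → (U i m).1 j = m.1 j :=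
    fun i h1 h2 m => (hU i h1 h2 m).1
  have hnd : ∀ i, 1 ≤ i → i < n → ∀ m : MaxChain n P,
      lab ((U i m).1 (i - 1)) ((U i m).1 i) ≤ lab ((U i m).1 i) ((U i m).1 (i + 1)) :=
    fun i h1 h2 m => not_lt.mp (hU i h1 h2 m).2
  -- idempotence
  have hidem : ∀ i, 1 ≤ i → i < n → ∀ m, U i (U i m) = U i m := by
    intro i h1 h2 m
    apply Subtype.ext
    funext j
    by_cases hj : j = i
    · rw [hj]
      exact chains_mid_eq hEL (U i (U i m)) (U i m) h1 h2
        (hloc i h1 h2 _ _ (by omega)) (hloc i h1 h2 _ _ (by omega))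
        (hnd i h1 h2 (U i m)) (hnd i h1 h2 m)
    · exact hloc i h1 h2 _ j hj
  -- commutation
  have hcomm : ∀ i j, 1 ≤ i → i < n → 1 ≤ j → j < n → i + 2 ≤ j →
      ∀ m, U i (U j m) = U j (U i m) := by
    intro i j hi1 hi2 hj1 hj2 hij m
    apply Subtype.ext
    funext k
    have lc : ∀ k, k ≠ i → k ≠ j → (U i (U j m)).1 k = m.1 k := fun k h h' =>
      (hloc i hi1 hi2 _ k h).trans (hloc j hj1 hj2 m k h')
    have ld : ∀ k, k ≠ i → k ≠ j → (U j (U i m)).1 k = m.1 k := fun k h h' =>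
      (hloc j hj1 hj2 _ k h').trans (hloc i hi1 hi2 m k h)
    by_cases hk1 : k = i
    · rw [hk1]
      refine chains_mid_eq hEL (U i (U j m)) (U j (U i m)) hi1 hi2
        ((lc (i - 1) (by omega) (by omega)).trans (ld (i - 1) (by omega) (by omega)).symm)
        ((lc (i + 1) (by omega) (by omega)).trans (ld (i + 1) (by omega) (by omega)).symm)
        (hnd i hi1 hi2 (U j m)) ?_
      have r1 : (U j (U i m)).1 (i - 1) = (U i m).1 (i - 1) := hloc j hj1 hj2 _ _ (by omega)
      have r2 : (U j (U i m)).1 i = (U i m).1 i := hloc j hj1 hj2 _ _ (by omega)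
      have r3 : (U j (U i m)).1 (i + 1) = (U i m).1 (i + 1) := hloc j hj1 hj2 _ _ (by omega)
      rw [r1, r2, r3]
      exact hnd i hi1 hi2 m
    · by_cases hk2 : k = j
      · rw [hk2]
        refine chains_mid_eq hEL (U i (U j m)) (U j (U i m)) hj1 hj2
          ((lc (j - 1) (by omega) (by omega)).trans (ld (j - 1) (by omega) (by omega)).symm)
          ((lc (j + 1) (by omega) (by omega)).trans (ld (j + 1) (by omega) (by omega)).symm)
          ?_ (hnd j hj1 hj2 (U i m))
        have r1 : (U i (U j m)).1 (j - 1) = (U j m).1 (j - 1) := hloc i hi1 hi2 _ _ (by omega)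
        have r2 : (U i (U j m)).1 j = (U j m).1 j := hloc i hi1 hi2 _ _ (by omega)
        have r3 : (U i (U j m)).1 (j + 1) = (U j m).1 (j + 1) := hloc i hi1 hi2 _ _ (by omega)
        rw [r1, r2, r3]
        exact hnd j hj1 hj2 m
      · exact (lc k hk1 hk2).trans (ld k hk1 hk2).symm
  -- braid relation
  have hbraid : ∀ i, 1 ≤ i → i + 1 < n →
      ∀ m, U i (U (i + 1) (U i m)) = U (i + 1) (U i (U (i + 1) m)) := by
    intro i h1 h2 m
    have hi2 : i < n := by omega
    have hj1 : (1 : ℕ) ≤ i + 1 := by omega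
    -- LHS labels
    have hAB_m3 := hnd i h1 hi2 (U (i + 1) (U i m))
    have hBC_m2 : lab ((U (i + 1) (U i m)).1 i) ((U (i + 1) (U i m)).1 (i + 1)) ≤
        lab ((U (i + 1) (U i m)).1 (i + 1)) ((U (i + 1) (U i m)).1 (i + 2)) := by
      simpa using hnd (i + 1) hj1 h2 (U i m)
    have hAB_m1 := hnd i h1 hi2 m
    have hC3 : lab ((U i (U (i + 1) (U i m))).1 (i + 1)) ((U i (U (i + 1) (U i m))).1 (i + 2)) =
        lab ((U (i + 1) (U i m)).1 (i + 1)) ((U (i + 1) (U i m)).1 (i + 2)) := by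
      rw [hloc i h1 hi2 _ _ (by omega), hloc i h1 hi2 _ _ (by omega)]
    have hA2 : lab ((U (i + 1) (U i m)).1 (i - 1)) ((U (i + 1) (U i m)).1 i) =
        lab ((U i m).1 (i - 1)) ((U i m).1 i) := by
      rw [hloc (i + 1) hj1 h2 _ _ (by omega), hloc (i + 1) hj1 h2 _ _ (by omega)]
    have hswap1 := swap_pairs hsn (U i (U (i + 1) (U i m))) (U (i + 1) (U i m)) h1 hi2
      (hloc i h1 hi2 _)
    have hswap2 := swap_pairs hsn (U (i + 1) (U i m)) (U i m) hj1 h2 (hloc (i + 1) hj1 h2 _)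
    simp only [Nat.add_sub_cancel] at hswap2
    have hBC_m3 : lab ((U i (U (i + 1) (U i m))).1 i) ((U i (U (i + 1) (U i m))).1 (i + 1)) ≤
        lab ((U i (U (i + 1) (U i m))).1 (i + 1)) ((U i (U (i + 1) (U i m))).1 (i + 2)) := by
      rw [hC3]
      rcases hswap1 with ⟨h', h''⟩ | ⟨h', h''⟩
      · rw [h'']
        exact hBC_m2
      · rw [h'', hA2]
        refine hAB_m1.trans ?_
        rcases hswap2 with ⟨hb, hc⟩ | ⟨hb, hc⟩
        · rw [← hb]
          exact hBC_m2
        · rw [← hc]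
    -- RHS labels
    have hBC_n3 : lab ((U (i + 1) (U i (U (i + 1) m))).1 i)
          ((U (i + 1) (U i (U (i + 1) m))).1 (i + 1)) ≤
        lab ((U (i + 1) (U i (U (i + 1) m))).1 (i + 1))
          ((U (i + 1) (U i (U (i + 1) m))).1 (i + 2)) := by
      simpa using hnd (i + 1) hj1 h2 (U i (U (i + 1) m))
    have hA_n3 : lab ((U (i + 1) (U i (U (i + 1) m))).1 (i - 1))
          ((U (i + 1) (U i (U (i + 1) m))).1 i) =
        lab ((U i (U (i + 1) m)).1 (i - 1)) ((U i (U (i + 1) m)).1 i) := by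
      rw [hloc (i + 1) hj1 h2 _ _ (by omega), hloc (i + 1) hj1 h2 _ _ (by omega)]
    have hAB_n2 := hnd i h1 hi2 (U (i + 1) m)
    have hswap3 := swap_pairs hsn (U (i + 1) (U i (U (i + 1) m))) (U i (U (i + 1) m)) hj1 h2
      (hloc (i + 1) hj1 h2 _)
    simp only [Nat.add_sub_cancel] at hswap3
    have hC_n2 : lab ((U i (U (i + 1) m)).1 (i + 1)) ((U i (U (i + 1) m)).1 (i + 2)) =
        lab ((U (i + 1) m).1 (i + 1)) ((U (i + 1) m).1 (i + 2)) := by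
      rw [hloc i h1 hi2 _ _ (by omega), hloc i h1 hi2 _ _ (by omega)]
    have hBC_n1 : lab ((U (i + 1) m).1 i) ((U (i + 1) m).1 (i + 1)) ≤
        lab ((U (i + 1) m).1 (i + 1)) ((U (i + 1) m).1 (i + 2)) := by
      simpa using hnd (i + 1) hj1 h2 m
    have hswap4 := swap_pairs hsn (U i (U (i + 1) m)) (U (i + 1) m) h1 hi2 (hloc i h1 hi2 _)
    have hAC_n2 : lab ((U i (U (i + 1) m)).1 (i - 1)) ((U i (U (i + 1) m)).1 i) ≤
        lab ((U i (U (i + 1) m)).1 (i + 1)) ((U i (U (i + 1) m)).1 (i + 2)) := by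
      rw [hC_n2]
      rcases hswap4 with ⟨ha, hb⟩ | ⟨ha, hb⟩
      · refine hAB_n2.trans ?_
        rw [hb]
        exact hBC_n1
      · rw [ha]
        exact hBC_n1
    have hAB_n3 : lab ((U (i + 1) (U i (U (i + 1) m))).1 (i - 1))
          ((U (i + 1) (U i (U (i + 1) m))).1 i) ≤
        lab ((U (i + 1) (U i (U (i + 1) m))).1 i)
          ((U (i + 1) (U i (U (i + 1) m))).1 (i + 1)) := by
      rw [hA_n3]
      rcases hswap3 with ⟨hb, hc⟩ | ⟨hb, hc⟩
      · rw [hb]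
        exact hAB_n2
      · rw [hb]
        exact hAC_n2
    -- endpoints
    have e1 : (U i (U (i + 1) (U i m))).1 (i - 1) = m.1 (i - 1) :=
      (hloc i h1 hi2 _ _ (by omega)).trans
        ((hloc (i + 1) hj1 h2 _ _ (by omega)).trans (hloc i h1 hi2 m _ (by omega)))
    have e2 : (U i (U (i + 1) (U i m))).1 (i + 2) = m.1 (i + 2) :=
      (hloc i h1 hi2 _ _ (by omega)).trans
        ((hloc (i + 1) hj1 h2 _ _ (by omega)).trans (hloc i h1 hi2 m _ (by omega)))
    have e1' : (U (i + 1) (U i (U (i + 1) m))).1 (i - 1) = m.1 (i - 1) :=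
      (hloc (i + 1) hj1 h2 _ _ (by omega)).trans
        ((hloc i h1 hi2 _ _ (by omega)).trans (hloc (i + 1) hj1 h2 m _ (by omega)))
    have e2' : (U (i + 1) (U i (U (i + 1) m))).1 (i + 2) = m.1 (i + 2) :=
      (hloc (i + 1) hj1 h2 _ _ (by omega)).trans
        ((hloc i h1 hi2 _ _ (by omega)).trans (hloc (i + 1) hj1 h2 m _ (by omega)))
    have key := chains_mid3_eq hEL (U i (U (i + 1) (U i m))) (U (i + 1) (U i (U (i + 1) m)))
      h1 h2 (e1.trans e1'.symm) (e2.trans e2'.symm) hAB_m3 hBC_m3 hAB_n3 hBC_n3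
    apply Subtype.ext
    funext k
    by_cases hk1 : k = i
    · rw [hk1]
      exact key.1
    · by_cases hk2 : k = i + 1
      · rw [hk2]
        exact key.2
      · have l1 : (U i (U (i + 1) (U i m))).1 k = m.1 k :=
          (hloc i h1 hi2 _ _ hk1).trans
            ((hloc (i + 1) hj1 h2 _ _ hk2).trans (hloc i h1 hi2 m _ hk1))
        have l2 : (U (i + 1) (U i (U (i + 1) m))).1 k = m.1 k :=
          (hloc (i + 1) hj1 h2 _ _ hk2).trans
            ((hloc i h1 hi2 _ _ hk1).trans (hloc (i + 1) hj1 h2 m _ hk2))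
        exact l1.trans l2.symm
  -- lift to the linear operators
  refine ⟨?_, ?_, ?_⟩
  · intro i h1 h2
    have huu : U i ∘ U i = U i := funext (hidem i h1 h2)
    rw [hT i, Module.End.mul_eq_comp, LinearMap.neg_comp, LinearMap.comp_neg, neg_neg,
      ← Finsupp.lmapDomain_comp, huu]
    exact (neg_neg (Finsupp.lmapDomain ℂ ℂ (U i))).symm
  · intro i j h1 h2 h3 h4 h5
    have huu : U i ∘ U j = U j ∘ U i := funext (hcomm i j h1 h2 h3 h4 h5)
    rw [hT i, hT j, Module.End.mul_eq_comp, Module.End.mul_eq_comp, LinearMap.neg_comp,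
      LinearMap.neg_comp, LinearMap.comp_neg, LinearMap.comp_neg,
      ← Finsupp.lmapDomain_comp, ← Finsupp.lmapDomain_comp, huu]
  · intro i h1 h2
    have huu : (U i ∘ U (i + 1)) ∘ U i = (U (i + 1) ∘ U i) ∘ U (i + 1) :=
      funext (hbraid i h1 h2)
    rw [hT i, hT (i + 1)]
    simp only [Module.End.mul_eq_comp, LinearMap.neg_comp, LinearMap.comp_neg, neg_neg,
      ← Finsupp.lmapDomain_comp]
    rw [huu]
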